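/- If θ ∈ 𝕋^d is (A,N)-irrational and m ∈ ℤ^d \ {0} with ‖m‖₁·|h| ≤ A for a nonzero integer h, then for any arithmetic progression P ⊆ {1,…,N} with common difference h, |E_{n∈P} e(m·θn)| ≤ C·N/(|P|·A) for an absolute constant C. -/

import Mathlib

open Finset Complex

/-- `θ ∈ 𝕋^d` is `(A,N)`-irrational: for every nonzero `m ∈ ℤ^d` with `‖m‖₁ ≤ A`,
the distance of `m·θ` to the nearest integer is at least `A/N`. -/
def IsIrrational1 (d : ℕ) (A N : ℝ) (θ : Fin d → ℝ) : Prop :=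
  ∀ m : Fin d → ℤ, m ≠ 0 → (∑ i, |(m i : ℝ)|) ≤ A →
    A / N ≤ |(∑ i, (m i : ℝ) * θ i) - round (∑ i, (m i : ℝ) * θ i)|

lemma abs_exp_mul_I_sub_one' (y : ℝ) :
    ‖Complex.exp ((y : ℂ) * Complex.I) - 1‖ = 2 * |Real.sin (y / 2)| := by
  have h1 : Complex.exp ((y : ℂ) * Complex.I) - 1
      = ((Real.cos y - 1 : ℝ) : ℂ) + ((Real.sin y : ℝ) : ℂ) * Complex.I := by
    rw [Complex.exp_mul_I]
    push_cast
    ring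
  rw [h1, Complex.norm_def, Complex.normSq_add_mul_I]
  have hcos : Real.cos y = 1 - 2 * Real.sin (y / 2) ^ 2 := by
    have h2 := Real.cos_two_mul (y / 2)
    rw [show 2 * (y / 2) = y by ring] at h2
    nlinarith [Real.sin_sq_add_cos_sq (y / 2)]
  have h3 : (Real.cos y - 1) ^ 2 + Real.sin y ^ 2 = 2 - 2 * Real.cos y := by
    nlinarith [Real.sin_sq_add_cos_sq y]
  rw [h3, hcos, show (2 : ℝ) - 2 * (1 - 2 * Real.sin (y / 2) ^ 2)
      = (2 * |Real.sin (y / 2)|) ^ 2 by rw [mul_pow, _root_.sq_abs]; ring]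
  exact Real.sqrt_sq (by positivity)

/-- Exponential sums of `e(m·θ n)` over an arithmetic progression
`P = {a + jh : 0 ≤ j < L} ⊆ {1,…,N}` are small when `θ` is `(A,N)`-irrational,
`m ≠ 0` and `‖m‖₁ |h| ≤ A`: `|E_{n ∈ P} e(m·θ n)| ≤ C N/(|P| A)`. -/
theorem exp_sum_progression_bound :
    ∃ C : ℝ, 0 < C ∧ ∀ (d N : ℕ) (A : ℝ) (θ : Fin d → ℝ) (m : Fin d → ℤ)
      (h a : ℤ) (L : ℕ), 0 < N → 0 < L →
      IsIrrational1 d A N θ → m ≠ 0 → h ≠ 0 →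
      (∑ i, |(m i : ℝ)|) * |(h : ℝ)| ≤ A →
      (∀ j : ℕ, j < L → 1 ≤ a + j * h ∧ a + j * h ≤ N) →
      ‖(1 / (L : ℂ)) * ∑ j ∈ Finset.range L,
          Complex.exp (2 * Real.pi * Complex.I *
            (∑ i, (m i : ℝ) * θ i) * ((a : ℝ) + j * h))‖ ≤ C * N / (L * A) := by
  refine ⟨1, one_pos, ?_⟩
  intro d N A θ m h a L hN hL hirr hm hh hA _
  set β : ℝ := ∑ i, (m i : ℝ) * θ i with hβ
  have hLpos : (0:ℝ) < L := by exact_mod_cast hL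
  have hNpos : (0:ℝ) < N := by exact_mod_cast hN
  -- A is positive
  obtain ⟨i₀, hi₀⟩ := Function.ne_iff.mp hm
  have hone : (1:ℝ) ≤ |(m i₀ : ℝ)| := by
    have h1 : (1:ℤ) ≤ |m i₀| := Int.one_le_abs (by simpa using hi₀)
    exact_mod_cast h1
  have hsum1 : (1 : ℝ) ≤ ∑ i, |(m i : ℝ)| :=
    hone.trans (Finset.single_le_sum (f := fun i => |(m i : ℝ)|)
      (fun i _ => abs_nonneg _) (Finset.mem_univ i₀))
  have hh1 : (1 : ℝ) ≤ |(h : ℝ)| := by exact_mod_cast Int.one_le_abs hh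
  have hApos : (0 : ℝ) < A := lt_of_lt_of_le one_pos (by nlinarith)
  -- apply irrationality to h • m
  have hkey : A / N ≤ |β * h - round (β * h)| := by
    have := hirr (fun i => h * m i) ?_ ?_
    · have heq : (∑ i, ((h * m i : ℤ) : ℝ) * θ i) = β * h := by
        rw [hβ, Finset.sum_mul]; push_cast; exact Finset.sum_congr rfl fun i _ => by ring
      rwa [heq] at this
    · intro hc
      exact hi₀ (by have := congrFun hc i₀; simpa [hh] using this)
    · calc ∑ i, |((h * m i : ℤ) : ℝ)| = (∑ i, |(m i : ℝ)|) * |(h:ℝ)| := by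
            rw [Finset.sum_mul]; push_cast [abs_mul]
            exact Finset.sum_congr rfl fun i _ => by ring
        _ ≤ A := hA
  have hANN : (0:ℝ) < A / N := div_pos hApos hNpos
  set r : ℝ := β * h - round (β * h) with hr
  have hrne : r ≠ 0 := by
    intro hc
    rw [hc] at hkey
    simp at hkey
    linarith
  have hrhalf : |r| ≤ 1/2 := abs_sub_round _
  -- sine lower bound
  have hsin : 2 * (A / N) ≤ |Real.sin (Real.pi * (β * h))| := by
    have h2 : |Real.sin (Real.pi * (β * h))| = |Real.sin (Real.pi * r)| := by
      have heq2 : Real.pi * (β * h) = Real.pi * r + (round (β * h) : ℤ) * Real.pi := by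
        rw [hr]; push_cast; ring
      have habs1 : |((-1:ℝ)) ^ round (β * (h:ℝ))| = 1 := by
        rcases Int.even_or_odd (round (β * (h:ℝ))) with he | ho
        · rw [he.neg_one_zpow, abs_one]
        · rw [ho.neg_one_zpow, abs_neg, abs_one]
      rw [heq2, Real.sin_add_int_mul_pi, abs_mul, habs1, one_mul]
    have h3 : |Real.sin (Real.pi * r)| = Real.sin (Real.pi * |r|) := by
      rcases le_or_gt 0 r with h4 | h4
      · rw [_root_.abs_of_nonneg h4, _root_.abs_of_nonneg
          (Real.sin_nonneg_of_nonneg_of_le_pi (by positivity)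
            (by nlinarith [Real.pi_pos, _root_.abs_of_nonneg h4]))]
      · have h5 : |r| = -r := abs_of_neg h4
        have h6 : 0 ≤ Real.sin (-(Real.pi * r)) :=
          Real.sin_nonneg_of_nonneg_of_le_pi (by nlinarith [Real.pi_pos])
            (by nlinarith [Real.pi_pos, h5, hrhalf])
        have h7 : Real.sin (Real.pi * r) ≤ 0 := by
          rw [show Real.pi * r = -(-(Real.pi * r)) by ring, Real.sin_neg]; linarith
        rw [h5, show Real.pi * -r = -(Real.pi * r) by ring, Real.sin_neg,
          _root_.abs_of_nonpos h7]
    rw [h2, h3]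
    have h6 : 2 / Real.pi * (Real.pi * |r|) ≤ Real.sin (Real.pi * |r|) :=
      Real.mul_le_sin (by positivity) (by nlinarith [Real.pi_pos])
    have h7 : 2 / Real.pi * (Real.pi * |r|) = 2 * |r| := by
      field_simp
    have h8 : A / N ≤ |r| := hkey
    nlinarith
  have hsinpos : 0 < |Real.sin (Real.pi * (β * h))| := by linarith [mul_pos two_pos hANN]
  -- geometric series
  set z : ℂ := Complex.exp ((2 * Real.pi * (β * h) : ℝ) * Complex.I) with hz
  have hterm : ∀ j : ℕ, Complex.exp (2 * Real.pi * Complex.I * (β : ℂ) * ((a : ℝ) + j * h))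
      = Complex.exp ((2 * Real.pi * β * a : ℝ) * Complex.I) * z ^ j := by
    intro j
    rw [hz, ← Complex.exp_nat_mul, ← Complex.exp_add]
    congr 1
    push_cast
    ring
  have hzabs : ‖z‖ = 1 := by rw [hz, Complex.norm_exp_ofReal_mul_I]
  have hzne : z ≠ 1 := by
    intro hc
    rw [hz, Complex.exp_eq_one_iff] at hc
    obtain ⟨n, hn⟩ := hc
    have h9c : ((2 * Real.pi * (β * h) : ℝ) : ℂ) = (((n : ℝ) * (2 * Real.pi) : ℝ) : ℂ) := by
      have h' : ((2 * Real.pi * (β * h) : ℝ) : ℂ) * Complex.I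
          = (((n : ℝ) * (2 * Real.pi) : ℝ) : ℂ) * Complex.I := by
        push_cast
        push_cast at hn
        linear_combination hn
      exact mul_right_cancel₀ Complex.I_ne_zero h'
    have h9 : 2 * Real.pi * (β * h) = (n : ℝ) * (2 * Real.pi) := by exact_mod_cast h9c
    have h9' : (2 * Real.pi) * (β * h) = (2 * Real.pi) * (n : ℝ) := by linear_combination h9
    have h10 : β * h = (n : ℝ) :=
      mul_left_cancel₀ (by positivity : (0:ℝ) < 2 * Real.pi).ne' h9'
    apply hrne
    rw [hr, h10]
    simp
  have hgeom : (∑ j ∈ Finset.range L, z ^ j) = (z ^ L - 1) / (z - 1) := geom_sum_eq hzne L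
  have hz1 : ‖z - 1‖ = 2 * |Real.sin (Real.pi * (β * h))| := by
    have := abs_exp_mul_I_sub_one' (2 * Real.pi * (β * h))
    rw [hz, this]
    congr 2
    ring
  have habs_sum : ‖∑ j ∈ Finset.range L, z ^ j‖ ≤ (N : ℝ) / (2 * A) := by
    rw [hgeom, norm_div, hz1]
    have hnum : ‖z ^ L - 1‖ ≤ 2 := by
      rw [sub_eq_add_neg]
      refine (norm_add_le _ _).trans ?_
      simp only [norm_pow, hzabs, one_pow, norm_neg, norm_one]
      norm_num
    calc ‖z ^ L - 1‖ / (2 * |Real.sin (Real.pi * (β * h))|)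
        ≤ 2 / (2 * (2 * (A / N))) :=
          div_le_div₀ (by norm_num) hnum (by positivity) (by linarith)
      _ = (N : ℝ) / (2 * A) := by
          field_simp
  -- conclusion
  have hsum_eq : (∑ j ∈ Finset.range L, Complex.exp (2 * Real.pi * Complex.I * (β : ℂ)
        * ((a : ℝ) + j * h)))
      = Complex.exp ((2 * Real.pi * β * a : ℝ) * Complex.I) * ∑ j ∈ Finset.range L, z ^ j := by
    rw [Finset.mul_sum]
    exact Finset.sum_congr rfl fun j _ => hterm j
  rw [hsum_eq, norm_mul, norm_mul, Complex.norm_exp_ofReal_mul_I, one_mul]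
  have h1L : ‖1 / (L : ℂ)‖ = 1 / L := by
    rw [norm_div, norm_one, Complex.norm_natCast]
  rw [h1L]
  calc (1 / (L:ℝ)) * ‖∑ j ∈ Finset.range L, z ^ j‖
      ≤ (1 / (L:ℝ)) * ((N:ℝ) / (2 * A)) :=
        mul_le_mul_of_nonneg_left habs_sum (by positivity)
    _ = (N:ℝ) / (2 * (L * A)) := by
        rw [div_mul_div_comm, one_mul]
        congr 1
        ring
    _ ≤ 1 * N / (L * A) := by
        rw [one_mul, div_le_div_iff₀ (by positivity) (by positivity)]
        nlinarith [mul_pos hNpos (mul_pos hLpos hApos)]
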